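/- Let N ≥ 1 and let g : ℝ^N → [0,∞) be integrable with ρ₀ = ∫ g(v) dv and ρ₁ = ∫ g(v)|v| dv finite. Then for every K > 0 there exist a > 0 and b > 0 such that the function h(v,t) = K·exp( −b t − a·(1+|v|²)^{3/4} ) satisfies −∂_t h(v,t) + Δ_v h(v,t) − h(v,t)·∫_{ℝ^N} g(v_*)|v − v_*| dv_* ≥ 0 for all t > 0 and all v ∈ ℝ^N. In particular it suffices to choose a with (9/4)a² ≥ ρ₀ and then b ≥ (3Na)/2 + ρ₀ + ρ₁. -/

import Mathlib

open MeasureTheory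

noncomputable section

/-- The Laplacian in the velocity variable. -/
def laplacian {N : ℕ} (f : EuclideanSpace ℝ (Fin N) → ℝ)
    (v : EuclideanSpace ℝ (Fin N)) : ℝ :=
  ∑ i : Fin N, iteratedFDeriv ℝ 2 f v ![EuclideanSpace.single i 1, EuclideanSpace.single i 1]

namespace SubsolutionAux

open Real
open scoped RealInnerProductSpace

def Gf (K a c s : ℝ) : ℝ := K * Real.exp (c - a * (1 + s) ^ ((3:ℝ)/4))
def A1 (a s : ℝ) : ℝ := -(a * ((3:ℝ)/4 * (1 + s) ^ ((3:ℝ)/4 - 1)))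
def A2 (a s : ℝ) : ℝ := -(a * ((3:ℝ)/4 * (((3:ℝ)/4 - 1) * (1 + s) ^ ((3:ℝ)/4 - 2))))
def G1 (K a c s : ℝ) : ℝ := A1 a s * Gf K a c s
def G2 (K a c s : ℝ) : ℝ := A2 a s * Gf K a c s + A1 a s * G1 K a c s

lemma hs_ne {s : ℝ} (hs : 0 ≤ s) : (1 + s) ≠ 0 := by positivity

lemma hasDerivAt_rpow34 {s : ℝ} (hs : 0 ≤ s) :
    HasDerivAt (fun s : ℝ => (1 + s) ^ ((3:ℝ)/4)) ((3:ℝ)/4 * (1 + s) ^ ((3:ℝ)/4 - 1)) s := by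
  have h1 : HasDerivAt (fun s : ℝ => 1 + s) 1 s := (hasDerivAt_id s).const_add 1
  have h2 := (Real.hasDerivAt_rpow_const (x := 1 + s) (p := (3:ℝ)/4) (Or.inl (hs_ne hs))).comp s h1
  simpa [Function.comp_def] using h2

lemma hasDerivAt_G {K a c s : ℝ} (hs : 0 ≤ s) :
    HasDerivAt (Gf K a c) (G1 K a c s) s := by
  have hφ : HasDerivAt (fun s : ℝ => c - a * (1 + s) ^ ((3:ℝ)/4))
      (-(a * ((3:ℝ)/4 * (1 + s) ^ ((3:ℝ)/4 - 1)))) s :=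
    ((hasDerivAt_rpow34 hs).const_mul a).const_sub c
  have := (hφ.exp).const_mul K
  refine this.congr_deriv ?_
  simp [G1, A1, Gf]; ring

lemma hasDerivAt_A1 {a s : ℝ} (hs : 0 ≤ s) :
    HasDerivAt (A1 a) (A2 a s) s := by
  have h1 : HasDerivAt (fun s : ℝ => 1 + s) 1 s := (hasDerivAt_id s).const_add 1
  have h2 := (Real.hasDerivAt_rpow_const (x := 1 + s) (p := (3:ℝ)/4 - 1) (Or.inl (hs_ne hs))).comp s h1
  have h3 : HasDerivAt (fun s : ℝ => (1 + s) ^ ((3:ℝ)/4 - 1))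
      (((3:ℝ)/4 - 1) * (1 + s) ^ ((3:ℝ)/4 - 2)) s := by
    have he : (3:ℝ)/4 - 1 - 1 = (3:ℝ)/4 - 2 := by norm_num
    simpa [he, Function.comp_def] using h2
  exact ((h3.const_mul ((3:ℝ)/4)).const_mul a).neg

lemma hasDerivAt_G1 {K a c s : ℝ} (hs : 0 ≤ s) :
    HasDerivAt (G1 K a c) (G2 K a c s) s :=
  (hasDerivAt_A1 hs).mul (hasDerivAt_G hs)

variable {N : ℕ}

lemma hasFDerivAt_f (K a c : ℝ) (w : EuclideanSpace ℝ (Fin N)) :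
    HasFDerivAt (fun w : EuclideanSpace ℝ (Fin N) => Gf K a c (‖w‖^2))
      (G1 K a c (‖w‖^2) • ((2:ℕ) • innerSL ℝ w)) w := by
  have := (hasDerivAt_G (K := K) (a := a) (c := c) (sq_nonneg ‖w‖)).comp_hasFDerivAt w (hasStrictFDerivAt_norm_sq w).hasFDerivAt
  exact this

lemma fderiv_f (K a c : ℝ) :
    fderiv ℝ (fun w : EuclideanSpace ℝ (Fin N) => Gf K a c (‖w‖^2))
      = fun w => G1 K a c (‖w‖^2) • ((2:ℕ) • innerSL ℝ w) :=
  funext fun w => (hasFDerivAt_f K a c w).fderiv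

lemma second_deriv (K a c : ℝ) (v e : EuclideanSpace ℝ (Fin N)) :
    fderiv ℝ (fderiv ℝ (fun w : EuclideanSpace ℝ (Fin N) => Gf K a c (‖w‖^2))) v e e
      = 2 * G1 K a c (‖v‖^2) * ⟪e, e⟫ + 4 * G2 K a c (‖v‖^2) * ⟪v, e⟫^2 := by
  rw [fderiv_f]
  have hc : HasFDerivAt (fun w : EuclideanSpace ℝ (Fin N) => G1 K a c (‖w‖^2))
      (G2 K a c (‖v‖^2) • ((2:ℕ) • innerSL ℝ v)) v := by
    have := (hasDerivAt_G1 (K := K) (a := a) (c := c) (sq_nonneg ‖v‖)).comp_hasFDerivAt v (hasStrictFDerivAt_norm_sq v).hasFDerivAt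
    exact this
  have hL : HasFDerivAt (fun w : EuclideanSpace ℝ (Fin N) => (2:ℕ) • innerSL ℝ w)
      ((2:ℕ) • (innerSL ℝ : EuclideanSpace ℝ (Fin N) →L[ℝ] _)) v :=
    ((2:ℕ) • (innerSL ℝ : EuclideanSpace ℝ (Fin N) →L[ℝ] _)).hasFDerivAt
  have hF : HasFDerivAt (fun w : EuclideanSpace ℝ (Fin N) => G1 K a c (‖w‖^2) • ((2:ℕ) • innerSL ℝ w)) _ v := hc.smul hL
  rw [hF.fderiv]
  simp [ContinuousLinearMap.smul_apply, ContinuousLinearMap.smulRight_apply, real_inner_comm, innerSL_apply_apply]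
  rw [innerSL_apply_apply, real_inner_self_eq_norm_sq]
  ring

lemma laplacian_eq (K a c : ℝ) (v : EuclideanSpace ℝ (Fin N)) :
    laplacian (fun w => K * Real.exp (c - a * (1 + ‖w‖^2) ^ ((3:ℝ)/4))) v
      = 2 * N * G1 K a c (‖v‖^2) + 4 * G2 K a c (‖v‖^2) * ‖v‖^2 := by
  have hnorm : ‖v‖^2 = ∑ i, (v i)^2 := by
    rw [EuclideanSpace.norm_eq, Real.sq_sqrt (by positivity)]
    simp [Real.norm_eq_abs, sq_abs]
  unfold laplacian
  have : ∀ i : Fin N, iteratedFDeriv ℝ 2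
      (fun w => K * Real.exp (c - a * (1 + ‖w‖^2) ^ ((3:ℝ)/4))) v
      ![EuclideanSpace.single i 1, EuclideanSpace.single i 1]
      = 2 * G1 K a c (‖v‖^2) + 4 * G2 K a c (‖v‖^2) * (v i)^2 := by
    intro i
    rw [iteratedFDeriv_two_apply]
    have := second_deriv K a c v (EuclideanSpace.single i (1:ℝ))
    simp only [Matrix.cons_val_zero, Matrix.cons_val_one, Matrix.head_cons]
    rw [show (fun w : EuclideanSpace ℝ (Fin N) => K * Real.exp (c - a * (1 + ‖w‖^2) ^ ((3:ℝ)/4)))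
        = fun w => Gf K a c (‖w‖^2) from rfl, this]
    simp [EuclideanSpace.inner_single_right, EuclideanSpace.inner_single_left,
      EuclideanSpace.single_apply]
  rw [Finset.sum_congr rfl fun i _ => this i]
  rw [Finset.sum_add_distrib, Finset.sum_const, ← Finset.mul_sum, hnorm]
  simp [Finset.card_univ]
  ring

lemma loss_bound (g : EuclideanSpace ℝ (Fin N) → ℝ) (hg0 : ∀ v, 0 ≤ g v)
    (hgint : Integrable g volume) (hg1 : Integrable (fun v => g v * ‖v‖) volume)
    (v : EuclideanSpace ℝ (Fin N)) :
    ∫ vs, g vs * ‖v - vs‖ ≤ (∫ w, g w) * ‖v‖ + ∫ w, g w * ‖w‖ := by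
  have hmeas : AEStronglyMeasurable (fun vs : EuclideanSpace ℝ (Fin N) => g vs * ‖v - vs‖) volume :=
    hgint.aestronglyMeasurable.mul ((continuous_const.sub continuous_id).norm.aestronglyMeasurable)
  have hbd : Integrable (fun vs : EuclideanSpace ℝ (Fin N) => g vs * ‖v‖ + g vs * ‖vs‖) volume :=
    (hgint.mul_const ‖v‖).add hg1
  have hle : ∀ vs, g vs * ‖v - vs‖ ≤ g vs * ‖v‖ + g vs * ‖vs‖ := by
    intro vs
    have := norm_sub_le v vs
    nlinarith [hg0 vs]
  have hint : Integrable (fun vs : EuclideanSpace ℝ (Fin N) => g vs * ‖v - vs‖) volume := by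
    refine hbd.mono hmeas (ae_of_all _ fun vs => ?_)
    have h0 : 0 ≤ g vs * ‖v - vs‖ := mul_nonneg (hg0 vs) (norm_nonneg _)
    have h1 : 0 ≤ g vs * ‖v‖ + g vs * ‖vs‖ :=
      add_nonneg (mul_nonneg (hg0 vs) (norm_nonneg _)) (mul_nonneg (hg0 vs) (norm_nonneg _))
    rw [Real.norm_eq_abs, Real.norm_eq_abs, abs_of_nonneg h0, abs_of_nonneg h1]
    exact hle vs
  calc ∫ vs, g vs * ‖v - vs‖ ≤ ∫ vs, (g vs * ‖v‖ + g vs * ‖vs‖) :=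
        integral_mono hint hbd hle
    _ = (∫ w, g w) * ‖v‖ + ∫ w, g w * ‖w‖ := by
        rw [integral_add (hgint.mul_const ‖v‖) hg1, integral_mul_const]

lemma key_ineq (a b ρ₀ ρ₁ IV nv : ℝ) (ha : 0 < a) (hN : (1:ℝ) ≤ N)
    (hρ₀ : 0 ≤ ρ₀) (hρ₁ : 0 ≤ ρ₁) (h9 : ρ₀ ≤ 9/4 * a^2)
    (hb : 3 * N * a / 2 + ρ₀ + ρ₁ ≤ b)
    (hnv : 0 ≤ nv) (hI : IV ≤ ρ₀ * nv + ρ₁) :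
    0 ≤ b - 3/2 * N * a * ((1 + nv^2) ^ ((3:ℝ)/4 - 1))
      + 3/4 * a * nv^2 * ((1 + nv^2) ^ ((3:ℝ)/4 - 2))
      + 9/4 * a^2 * nv^2 * ((1 + nv^2) ^ ((3:ℝ)/4 - 1))^2 - IV := by
  set u0 := nv^2 with hu0
  have hu0n : 0 ≤ u0 := sq_nonneg nv
  set U := 1 + u0 with hU
  have hUpos : (0:ℝ) < U := by positivity
  have hU1 : (1:ℝ) ≤ U := by rw [hU]; linarith
  set r1 := U ^ ((3:ℝ)/4 - 1) with hr1
  set r2 := U ^ ((3:ℝ)/4 - 2) with hr2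
  have hr1pos : 0 < r1 := Real.rpow_pos_of_pos hUpos _
  have hr2pos : 0 < r2 := Real.rpow_pos_of_pos hUpos _
  have hr1le : r1 ≤ 1 := Real.rpow_le_one_of_one_le_of_nonpos hU1 (by norm_num)
  set s := Real.sqrt U with hs
  have hs1 : 1 ≤ s := by
    rw [hs]; rw [show (1:ℝ) = Real.sqrt 1 from (Real.sqrt_one).symm]
    exact Real.sqrt_le_sqrt hU1
  have hssq : s^2 = U := Real.sq_sqrt hUpos.le
  have hspos : 0 < s := lt_of_lt_of_le one_pos hs1
  have hnvs : nv ≤ s := by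
    rw [hs]
    rw [show nv = Real.sqrt (nv^2) from (Real.sqrt_sq hnv).symm]
    exact Real.sqrt_le_sqrt (by simp [hU, hu0])
  have hr1sq : r1^2 = s⁻¹ := by
    rw [hr1, ← Real.rpow_natCast (U ^ ((3:ℝ)/4 - 1)) 2, ← Real.rpow_mul hUpos.le]
    rw [hs, Real.sqrt_eq_rpow, ← Real.rpow_neg_one (U ^ (1/(2:ℝ))), ← Real.rpow_mul hUpos.le]
    norm_num
  have hu0r1 : u0 * r1^2 = s - s⁻¹ := by
    rw [hr1sq]
    have : u0 = s^2 - 1 := by rw [hssq]; ring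
    rw [this]
    field_simp
  have hsinv1 : s⁻¹ ≤ 1 := by
    rw [inv_le_one_iff₀]; right; exact hs1
  have hsinvpos : 0 < s⁻¹ := inv_pos.mpr hspos
  have hkey1 : ρ₀ * s - ρ₀ ≤ 9/4 * a^2 * (u0 * r1^2) := by
    rw [hu0r1]
    have hA := mul_le_mul_of_nonneg_right h9 (show (0:ℝ) ≤ s - s⁻¹ by linarith)
    have hB := mul_le_mul_of_nonneg_left hsinv1 hρ₀
    nlinarith [hA, hB]
  have hkey2 : 3/2 * N * a * r1 ≤ 3/2 * N * a := by
    have := mul_le_mul_of_nonneg_left hr1le (show (0:ℝ) ≤ 3/2 * (N:ℝ) * a by positivity)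
    linarith
  have hIs : IV ≤ ρ₀ * s + ρ₁ := by
    have := mul_le_mul_of_nonneg_left hnvs hρ₀
    linarith
  have hpos : 0 ≤ 3/4 * a * u0 * r2 :=
    mul_nonneg (mul_nonneg (by linarith : (0:ℝ) ≤ 3/4 * a) hu0n) hr2pos.le
  nlinarith [hkey1, hkey2, hIs, hb, hpos]

end SubsolutionAux

theorem stretched_exponential_parabolic_subsolution
    (N : ℕ) (hN : 1 ≤ N) (g : EuclideanSpace ℝ (Fin N) → ℝ)
    (hg0 : ∀ v, 0 ≤ g v)
    (hgint : Integrable g volume)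
    (hg1 : Integrable (fun v => g v * ‖v‖) volume)
    (K : ℝ) (hK : 0 < K) :
    (∃ a : ℝ, 0 < a ∧ ∃ b : ℝ, 0 < b ∧
      ∀ t : ℝ, 0 < t → ∀ v : EuclideanSpace ℝ (Fin N),
        0 ≤ -(deriv (fun s : ℝ =>
                K * Real.exp (-b * s - a * (1 + ‖v‖ ^ 2) ^ ((3 : ℝ) / 4))) t)
            + laplacian (fun w =>
                K * Real.exp (-b * t - a * (1 + ‖w‖ ^ 2) ^ ((3 : ℝ) / 4))) v
            - (K * Real.exp (-b * t - a * (1 + ‖v‖ ^ 2) ^ ((3 : ℝ) / 4))) *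
                ∫ vs : EuclideanSpace ℝ (Fin N), g vs * ‖v - vs‖) ∧
    (∀ a b : ℝ, 0 < a →
      (∫ v : EuclideanSpace ℝ (Fin N), g v) ≤ (9 / 4) * a ^ 2 →
      (3 * (N : ℝ) * a) / 2 + (∫ v : EuclideanSpace ℝ (Fin N), g v)
          + (∫ v : EuclideanSpace ℝ (Fin N), g v * ‖v‖) ≤ b →
      ∀ t : ℝ, 0 < t → ∀ v : EuclideanSpace ℝ (Fin N),
        0 ≤ -(deriv (fun s : ℝ =>
                K * Real.exp (-b * s - a * (1 + ‖v‖ ^ 2) ^ ((3 : ℝ) / 4))) t)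
            + laplacian (fun w =>
                K * Real.exp (-b * t - a * (1 + ‖w‖ ^ 2) ^ ((3 : ℝ) / 4))) v
            - (K * Real.exp (-b * t - a * (1 + ‖v‖ ^ 2) ^ ((3 : ℝ) / 4))) *
                ∫ vs : EuclideanSpace ℝ (Fin N), g vs * ‖v - vs‖) := by
  have hNR : (1:ℝ) ≤ (N:ℝ) := by exact_mod_cast hN
  set ρ₀ := ∫ v : EuclideanSpace ℝ (Fin N), g v with hρ₀def
  set ρ₁ := ∫ v : EuclideanSpace ℝ (Fin N), g v * ‖v‖ with hρ₁def
  have hρ₀ : 0 ≤ ρ₀ := integral_nonneg hg0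
  have hρ₁ : 0 ≤ ρ₁ := integral_nonneg fun v => mul_nonneg (hg0 v) (norm_nonneg v)
  have main : ∀ a b : ℝ, 0 < a → ρ₀ ≤ (9 / 4) * a ^ 2 →
      (3 * (N : ℝ) * a) / 2 + ρ₀ + ρ₁ ≤ b →
      ∀ t : ℝ, 0 < t → ∀ v : EuclideanSpace ℝ (Fin N),
        0 ≤ -(deriv (fun s : ℝ =>
                K * Real.exp (-b * s - a * (1 + ‖v‖ ^ 2) ^ ((3 : ℝ) / 4))) t)
            + laplacian (fun w =>
                K * Real.exp (-b * t - a * (1 + ‖w‖ ^ 2) ^ ((3 : ℝ) / 4))) v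
            - (K * Real.exp (-b * t - a * (1 + ‖v‖ ^ 2) ^ ((3 : ℝ) / 4))) *
                ∫ vs : EuclideanSpace ℝ (Fin N), g vs * ‖v - vs‖ := by
    intro a b ha h9 hb t ht v
    -- time derivative
    have hd : HasDerivAt (fun s : ℝ =>
        K * Real.exp (-b * s - a * (1 + ‖v‖ ^ 2) ^ ((3 : ℝ) / 4)))
        (K * (Real.exp (-b * t - a * (1 + ‖v‖ ^ 2) ^ ((3 : ℝ) / 4)) * (-b * 1))) t := by
      have h1 : HasDerivAt (fun s : ℝ => -b * s - a * (1 + ‖v‖ ^ 2) ^ ((3 : ℝ) / 4))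
          (-b * 1) t := ((hasDerivAt_id t).const_mul (-b)).sub_const _
      exact (h1.exp).const_mul K
    rw [hd.deriv]
    -- Laplacian
    rw [SubsolutionAux.laplacian_eq K a (-b * t) v]
    -- integral bound
    have hI := SubsolutionAux.loss_bound g hg0 hgint hg1 v
    have key := SubsolutionAux.key_ineq (N := N) a b ρ₀ ρ₁
      (∫ vs : EuclideanSpace ℝ (Fin N), g vs * ‖v - vs‖) ‖v‖ ha hNR hρ₀ hρ₁
      (by linarith) (by linarith) (norm_nonneg v) (by rw [hρ₀def, hρ₁def]; exact hI)
    have hH : 0 < K * Real.exp (-b * t - a * (1 + ‖v‖ ^ 2) ^ ((3 : ℝ) / 4)) := by positivity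
    simp only [SubsolutionAux.G1, SubsolutionAux.G2, SubsolutionAux.Gf, SubsolutionAux.A1, SubsolutionAux.A2] at *
    nlinarith [mul_nonneg hH.le key]
  refine ⟨?_, main⟩
  refine ⟨Real.sqrt (4/9 * ρ₀) + 1, by positivity, (3 * (N : ℝ) * (Real.sqrt (4/9 * ρ₀) + 1)) / 2 + ρ₀ + ρ₁, ?_, ?_⟩
  · have : 0 < (N:ℝ) := by linarith
    have hs : (0:ℝ) ≤ Real.sqrt (4/9 * ρ₀) := Real.sqrt_nonneg _
    positivity
  · refine main _ _ (by positivity) ?_ le_rfl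
    have h1 : Real.sqrt (4/9 * ρ₀) ^ 2 = 4/9 * ρ₀ := Real.sq_sqrt (by positivity)
    nlinarith [Real.sqrt_nonneg (4/9 * ρ₀)]
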